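/- Let A ∈ ℂ^{n×n} be Hermitian (A = A*), with Moore–Penrose pseudoinverse A†, and let S ⊆ {1,…,n}×{1,…,n} be a sparsity pattern that is symmetric, i.e., (i,j) ∈ S if and only if (j,i) ∈ S. If X ∈ F(A,S) satisfies J(X;A) ≤ J(Y;A) for all Y ∈ F(A,S) (i.e., X is a minimizer of the sparsification problem), then X is Hermitian: X = X*. -/

import Mathlib

open scoped Matrix

/-- `B` is the Moore–Penrose pseudoinverse of `A`. -/
def IsMPInv {m n : ℕ} (A : Matrix (Fin m) (Fin n) ℂ) (B : Matrix (Fin n) (Fin m) ℂ) : Prop :=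
  A * B * A = A ∧ B * A * B = B ∧ (A * B)ᴴ = A * B ∧ (B * A)ᴴ = B * A

/-- Squared Frobenius norm. -/
noncomputable def frobSq {m n : ℕ} (M : Matrix (Fin m) (Fin n) ℂ) : ℝ :=
  ∑ i, ∑ j, ‖M i j‖ ^ 2

/-- The misfit functional `J(X;A) = ½‖(X-A)A†‖_F² + ½‖A†(X-A)‖_F²`,
with the pseudoinverse `Ad` of `A` given explicitly. -/
noncomputable def Jmis {m n : ℕ} (X A : Matrix (Fin m) (Fin n) ℂ)
    (Ad : Matrix (Fin n) (Fin m) ℂ) : ℝ :=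
  (1 / 2) * frobSq ((X - A) * Ad) + (1 / 2) * frobSq (Ad * (X - A))

/-- The feasible set `F(A,S)`: the null space of `A` is contained in that of `X`,
the null space of `A*` in that of `X*`, and `X` vanishes outside the pattern `S`. -/
def Feasible {m n : ℕ} (A X : Matrix (Fin m) (Fin n) ℂ) (S : Set (Fin m × Fin n)) : Prop :=
  (∀ v : Fin n → ℂ, A.mulVec v = 0 → X.mulVec v = 0) ∧
  (∀ v : Fin m → ℂ, Aᴴ.mulVec v = 0 → Xᴴ.mulVec v = 0) ∧
  (∀ ij : Fin m × Fin n, ij ∉ S → X ij.1 ij.2 = 0)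

lemma frobSq_nonneg {m n : ℕ} (M : Matrix (Fin m) (Fin n) ℂ) : 0 ≤ frobSq M :=
  Finset.sum_nonneg fun _ _ => Finset.sum_nonneg fun _ _ => by positivity

lemma frobSq_eq_zero {m n : ℕ} {M : Matrix (Fin m) (Fin n) ℂ} (h : frobSq M = 0) : M = 0 := by
  ext i j
  have h1 := (Finset.sum_eq_zero_iff_of_nonneg
    (fun i _ => Finset.sum_nonneg fun j _ => by positivity)).1 h i (Finset.mem_univ i)
  have h2 := (Finset.sum_eq_zero_iff_of_nonneg (fun j _ => by positivity)).1 h1 j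
    (Finset.mem_univ j)
  have : ‖M i j‖ = 0 := by nlinarith [norm_nonneg (M i j)]
  simpa using norm_eq_zero.mp this

lemma frobSq_conjTranspose {m n : ℕ} (M : Matrix (Fin m) (Fin n) ℂ) : frobSq Mᴴ = frobSq M := by
  rw [frobSq, Finset.sum_comm, frobSq]
  simp [Matrix.conjTranspose_apply]

lemma frobSq_half_smul {m n : ℕ} (M : Matrix (Fin m) (Fin n) ℂ) :
    frobSq ((1/2 : ℂ) • M) = (1/4) * frobSq M := by
  simp only [frobSq, Matrix.smul_apply, smul_eq_mul, norm_mul, mul_pow, Finset.mul_sum]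
  norm_num

lemma frobSq_parallelogram {m n : ℕ} (M N : Matrix (Fin m) (Fin n) ℂ) :
    frobSq (M + N) + frobSq (M - N) = 2 * (frobSq M + frobSq N) := by
  simp only [frobSq, ← Finset.sum_add_distrib, Finset.mul_sum, Matrix.add_apply,
    Matrix.sub_apply]
  refine Finset.sum_congr rfl fun i _ => Finset.sum_congr rfl fun j _ => ?_
  simp only [Complex.sq_norm, Complex.normSq_apply,
    Complex.add_re, Complex.add_im, Complex.sub_re, Complex.sub_im]
  ring

lemma mp_unique {m n : ℕ} {A : Matrix (Fin m) (Fin n) ℂ} {B C : Matrix (Fin n) (Fin m) ℂ}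
    (hB : IsMPInv A B) (hC : IsMPInv A C) : B = C := by
  obtain ⟨b1, b2, b3, b4⟩ := hB
  obtain ⟨c1, c2, c3, c4⟩ := hC
  have hAB : A * B = A * C := by
    calc A * B = (A * B)ᴴ := b3.symm
      _ = ((A * C * A) * B)ᴴ := by rw [c1]
      _ = ((A * C) * (A * B))ᴴ := by rw [Matrix.mul_assoc (A * C)]
      _ = (A * B)ᴴ * (A * C)ᴴ := by rw [Matrix.conjTranspose_mul]
      _ = (A * B) * (A * C) := by rw [b3, c3]
      _ = (A * B * A) * C := by rw [Matrix.mul_assoc (A * B)]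
      _ = A * C := by rw [b1]
  have hBA : B * A = C * A := by
    calc B * A = (B * A)ᴴ := b4.symm
      _ = (B * (A * C * A))ᴴ := by rw [c1]
      _ = ((B * A) * (C * A))ᴴ := by
          rw [Matrix.mul_assoc A C A, ← Matrix.mul_assoc B A]
      _ = (C * A)ᴴ * (B * A)ᴴ := by rw [Matrix.conjTranspose_mul]
      _ = (C * A) * (B * A) := by rw [b4, c4]
      _ = C * (A * B * A) := by rw [Matrix.mul_assoc C, Matrix.mul_assoc A]
      _ = C * A := by rw [b1]
  calc B = B * A * B := b2.symm
    _ = C * A * B := by rw [hBA]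
    _ = C * (A * B) := by rw [Matrix.mul_assoc]
    _ = C * (A * C) := by rw [hAB]
    _ = C * A * C := by rw [Matrix.mul_assoc]
    _ = C := c2

/-- if `A` is Hermitian, the pattern `S` is symmetric, and `X` minimizes the
misfit over `F(A,S)`, then `X` is Hermitian. -/
theorem stmt18 {n : ℕ} (A X Ad : Matrix (Fin n) (Fin n) ℂ)
    (hA : A.IsHermitian) (hMP : IsMPInv A Ad)
    (S : Set (Fin n × Fin n)) (hS : ∀ i j : Fin n, (i, j) ∈ S ↔ (j, i) ∈ S)
    (hXfeas : Feasible A X S)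
    (hXmin : ∀ Y, Feasible A Y S → Jmis X A Ad ≤ Jmis Y A Ad) :
    X.IsHermitian := by
  have hAh : Aᴴ = A := hA
  obtain ⟨m1, m2, m3, m4⟩ := hMP
  -- `Adᴴ` is also a pseudoinverse of `A`, hence `Adᴴ = Ad`.
  have hAdh : Adᴴ = Ad := by
    refine mp_unique (A := A) ?_ ⟨m1, m2, m3, m4⟩
    have e1 : A * Adᴴ = Ad * A := by
      calc A * Adᴴ = Aᴴ * Adᴴ := by rw [hAh]
        _ = (Ad * A)ᴴ := (Matrix.conjTranspose_mul _ _).symm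
        _ = Ad * A := m4
    have e2 : Adᴴ * A = A * Ad := by
      calc Adᴴ * A = Adᴴ * Aᴴ := by rw [hAh]
        _ = (A * Ad)ᴴ := (Matrix.conjTranspose_mul _ _).symm
        _ = A * Ad := m3
    refine ⟨?_, ?_, ?_, ?_⟩
    · have h : (Aᴴ * Ad * Aᴴ)ᴴ = A * Adᴴ * A := by
        simp [Matrix.conjTranspose_mul, Matrix.mul_assoc]
      rw [← h, hAh, m1, hAh]
    · have h : (Ad * Aᴴ * Ad)ᴴ = Adᴴ * A * Adᴴ := by
        simp [Matrix.conjTranspose_mul, Matrix.mul_assoc]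
      rw [← h, hAh, m2]
    · rw [e1, m4]
    · rw [e2, m3]
  have hXker := hXfeas.1
  have hXkerH := hXfeas.2.1
  have hXsp := hXfeas.2.2
  -- `Xᴴ` is feasible.
  have hYfeas : Feasible A Xᴴ S := by
    refine ⟨fun v hv => hXkerH v (by rwa [hAh]), fun v hv => ?_, fun ij hij => ?_⟩
    · rw [Matrix.conjTranspose_conjTranspose]
      exact hXker v (by rwa [hAh] at hv)
    · rw [Matrix.conjTranspose_apply]
      have h2 : (ij.2, ij.1) ∉ S := fun h => hij (by simpa using (hS ij.2 ij.1).mp h)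
      simpa using hXsp (ij.2, ij.1) h2
  -- the symmetrization `Z` is feasible.
  have hZfeas : Feasible A ((1/2 : ℂ) • (X + Xᴴ)) S := by
    have hZh : ((1/2 : ℂ) • (X + Xᴴ))ᴴ = (1/2 : ℂ) • (Xᴴ + X) := by
      rw [Matrix.conjTranspose_smul, Matrix.conjTranspose_add,
        Matrix.conjTranspose_conjTranspose]
      norm_num
    refine ⟨fun v hv => ?_, fun v hv => ?_, fun ij hij => ?_⟩
    · rw [Matrix.smul_mulVec, Matrix.add_mulVec, hXker v hv, hYfeas.1 v hv,
        add_zero, smul_zero]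
    · rw [hZh, Matrix.smul_mulVec, Matrix.add_mulVec, hXkerH v hv,
        hXker v (by rwa [hAh] at hv), add_zero, smul_zero]
    · have h1 := hXsp ij hij
      have h3 : X ij.2 ij.1 = 0 :=
        hXsp (ij.2, ij.1) (fun h => hij (by simpa using (hS ij.2 ij.1).mp h))
      simp [Matrix.smul_apply, Matrix.add_apply, Matrix.conjTranspose_apply, h1, h3]
  -- key conjugate-transpose identities
  have hN : (Xᴴ - A) * Ad = (Ad * (X - A))ᴴ := by
    rw [Matrix.conjTranspose_mul, Matrix.conjTranspose_sub, hAh, hAdh]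
  have hQ : Ad * (Xᴴ - A) = ((X - A) * Ad)ᴴ := by
    rw [Matrix.conjTranspose_mul, Matrix.conjTranspose_sub, hAh, hAdh]
  -- value of J at the symmetrization
  have hZsub : (1/2 : ℂ) • (X + Xᴴ) - A = (1/2 : ℂ) • ((X - A) + (Xᴴ - A)) := by
    ext i j
    simp only [Matrix.smul_apply, Matrix.add_apply, Matrix.sub_apply, smul_eq_mul]
    ring
  have hZJ : Jmis ((1/2 : ℂ) • (X + Xᴴ)) A Ad
      = Jmis X A Ad - (1/8) * (frobSq ((X - Xᴴ) * Ad) + frobSq (Ad * (X - Xᴴ))) := by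
    rw [Jmis, hZsub, Matrix.smul_mul, Matrix.mul_smul, Matrix.add_mul, Matrix.mul_add,
      frobSq_half_smul, frobSq_half_smul, Jmis]
    have p1 := frobSq_parallelogram ((X - A) * Ad) ((Xᴴ - A) * Ad)
    have p2 := frobSq_parallelogram (Ad * (X - A)) (Ad * (Xᴴ - A))
    have e1 : (X - A) * Ad - (Xᴴ - A) * Ad = (X - Xᴴ) * Ad := by
      rw [← Matrix.sub_mul]; congr 1; abel
    have e2 : Ad * (X - A) - Ad * (Xᴴ - A) = Ad * (X - Xᴴ) := by
      rw [← Matrix.mul_sub]; congr 1; abel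
    have f1 : frobSq ((Xᴴ - A) * Ad) = frobSq (Ad * (X - A)) := by
      rw [hN, frobSq_conjTranspose]
    have f2 : frobSq (Ad * (Xᴴ - A)) = frobSq ((X - A) * Ad) := by
      rw [hQ, frobSq_conjTranspose]
    rw [e1] at p1
    rw [e2] at p2
    linarith
  have hle := hXmin _ hZfeas
  rw [hZJ] at hle
  have h1 : frobSq ((X - Xᴴ) * Ad) = 0 := by
    have := frobSq_nonneg ((X - Xᴴ) * Ad)
    have := frobSq_nonneg (Ad * (X - Xᴴ))
    linarith
  have hDAd : (X - Xᴴ) * Ad = 0 := frobSq_eq_zero h1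
  -- kernel argument: D := X - Xᴴ vanishes
  set D := X - Xᴴ with hD
  have hDker : ∀ v, A.mulVec v = 0 → D.mulVec v = 0 := fun v hv => by
    rw [hD, Matrix.sub_mulVec, hXker v hv, hXkerH v (by rwa [hAh]), sub_zero]
  have hcol : D * (1 - Ad * A) = 0 := by
    ext i j
    have hv : A.mulVec (fun k => (1 - Ad * A) k j) = 0 := by
      have hz : A * (1 - Ad * A) = 0 := by
        rw [Matrix.mul_sub, Matrix.mul_one, ← Matrix.mul_assoc, m1, sub_self]
      ext i'
      have : (A * (1 - Ad * A)) i' j = 0 := by rw [hz]; rfl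
      simpa [Matrix.mulVec, dotProduct, Matrix.mul_apply] using this
    have h0 := congrFun (hDker _ hv) i
    simpa [Matrix.mulVec, dotProduct, Matrix.mul_apply] using h0
  have hD0 : D = 0 := by
    have hsplit : D = D * (Ad * A) + D * (1 - Ad * A) := by
      rw [← Matrix.mul_add]; simp
    rw [hcol, add_zero, ← Matrix.mul_assoc, hDAd, Matrix.zero_mul] at hsplit
    exact hsplit
  have : X = Xᴴ := by
    have := sub_eq_zero.mp hD0
    exact this
  exact this.symm
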